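/- Characterization of the extended signed support for the abstract lasso: Let a₀ ∈ ℝ^P be identifiable with support I = I(a₀). Let J ⊆ {0,…,P−1} and s ∈ {−1,+1}^J be such that I ⊆ J, s_i = sign(a₀_i) for all i ∈ I, and Op_J has full rank, and set v_J = (Op_J^* Op_J)^{-1} s_J. Then (J, s_J) equals the extended signed support ext_±(a₀) if and only if both: (i) for every j ∈ J∖I, either v_j = 0 or s_j = −sign(v_j); and (ii) ‖Op_{J^c}^* Op_J v_J‖_∞ < 1. In that case the minimal-norm certificate is η₀ = Op^* Op_J (Op_J^* Op_J)^{-1} s_J. -/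

import Mathlib

open scoped BigOperators
noncomputable section

private lemma my_exists_pos_min {α : Type*} [Fintype α] (g : α → ℝ) (hg : ∀ a, 0 < g a) :
    ∃ ε : ℝ, 0 < ε ∧ ε ≤ 1 ∧ ∀ a, ε ≤ g a := by
  rcases isEmpty_or_nonempty α with h | h
  · exact ⟨1, one_pos, le_refl 1, fun a => (IsEmpty.false a).elim⟩
  · obtain ⟨b, -, hb⟩ := Finset.exists_min_image Finset.univ g ⟨Classical.arbitrary α, Finset.mem_univ _⟩
    refine ⟨min 1 (g b), lt_min one_pos (hg b), min_le_left _ _, fun a => ?_⟩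
    exact le_trans (min_le_right _ _) (hb a (Finset.mem_univ a))

private lemma my_varineq {H : Type*} [NormedAddCommGroup H] [InnerProductSpace ℝ H]
    (p d : H) (ε : ℝ) (hε : 0 < ε)
    (h : ∀ t : ℝ, 0 < t → t ≤ ε → ‖p‖ ≤ ‖p + t • d‖) : 0 ≤ (inner ℝ p d : ℝ) := by
  by_contra hc
  push_neg at hc
  set c : ℝ := inner ℝ p d with hcd
  set t : ℝ := min ε (-c / (‖d‖ ^ 2 + 1)) with ht
  have hdsq : (0:ℝ) ≤ ‖d‖ ^ 2 := sq_nonneg _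
  have ht0 : 0 < t := lt_min hε (div_pos (neg_pos.2 hc) (by positivity))
  have hnorm : ‖p‖ ≤ ‖p + t • d‖ := h t ht0 (min_le_left _ _)
  have hsq : ‖p‖ ^ 2 ≤ ‖p + t • d‖ ^ 2 := by
    have := mul_self_le_mul_self (norm_nonneg p) hnorm
    nlinarith [this]
  rw [norm_add_sq_real, real_inner_smul_right, norm_smul, Real.norm_eq_abs,
    abs_of_pos ht0, ← hcd] at hsq
  have h3 : t ≤ -c / (‖d‖ ^ 2 + 1) := min_le_right _ _
  have h4 : t * (‖d‖ ^ 2 + 1) ≤ -c := by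
    rw [← le_div_iff₀ (by positivity)]; exact h3
  nlinarith [hsq, h4, ht0]

set_option maxHeartbeats 4000000 in
/-- **Characterization of the extended signed support for the abstract lasso.**
`H` is a real Hilbert space, `Op : ℝ^P → H` a linear operator.  `a₀` is identifiable
(the unique solution of the basis pursuit `min ‖a‖₁ s.t. Op a = Op a₀`), `I` is its
support, `p₀` is the minimal-norm element of
`{p : ‖Op^* p‖_∞ ≤ 1, (Op^* p)_i = sign (a₀)_i on I}` and `η₀ = Op^* p₀` the
minimal-norm certificate.  Given `(J, s)` with `I ⊆ J`, `s = sign a₀` on `I`,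
`s = ±1` on `J`, `Op_J` injective, and `v` the vector supported on `J` with
`Op_J^* Op_J v = s_J` (i.e. `v_J = (Op_J^* Op_J)⁻¹ s_J`), we have:
`(J, s_J)` equals the extended signed support of `a₀` iff
(i) for all `j ∈ J ∖ I`, `v_j = 0` or `s_j = - sign v_j`, and
(ii) `‖Op_{Jᶜ}^* Op_J v_J‖_∞ < 1`;  and in that case `η₀ = Op^* Op_J v_J`. -/
theorem extended_signed_support_characterization
    {H : Type*} [NormedAddCommGroup H] [InnerProductSpace ℝ H] [CompleteSpace H]
    {P : ℕ} (Op : EuclideanSpace ℝ (Fin P) →L[ℝ] H)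
    (a₀ : EuclideanSpace ℝ (Fin P))
    -- a₀ is identifiable
    (hident : ∀ a : EuclideanSpace ℝ (Fin P), Op a = Op a₀ →
      (∑ i, |a i|) ≤ (∑ i, |a₀ i|) → a = a₀)
    -- the support of a₀
    (I : Set (Fin P)) (hI : I = {i : Fin P | a₀ i ≠ 0})
    -- the minimal-norm dual certificate p₀ and η₀ = Op^* p₀
    (p₀ : H)
    (hp₀_feas : (∀ i, |(ContinuousLinearMap.adjoint Op) p₀ i| ≤ 1) ∧
      ∀ i ∈ I, (ContinuousLinearMap.adjoint Op) p₀ i = Real.sign (a₀ i))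
    (hp₀_min : ∀ p : H,
      ((∀ i, |(ContinuousLinearMap.adjoint Op) p i| ≤ 1) ∧
        ∀ i ∈ I, (ContinuousLinearMap.adjoint Op) p i = Real.sign (a₀ i)) →
      ‖p₀‖ ≤ ‖p‖)
    (η₀ : EuclideanSpace ℝ (Fin P)) (hη₀ : η₀ = (ContinuousLinearMap.adjoint Op) p₀)
    -- the candidate signed set (J, s)
    (J : Set (Fin P)) (s : Fin P → ℝ)
    (hIJ : I ⊆ J)
    (hsI : ∀ i ∈ I, s i = Real.sign (a₀ i))
    (hs_sign : ∀ j ∈ J, s j = 1 ∨ s j = -1)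
    -- Op_J has full rank (is injective on vectors supported on J)
    (hfullrank : ∀ u : EuclideanSpace ℝ (Fin P),
      (∀ i, i ∉ J → u i = 0) → Op u = 0 → u = 0)
    -- v : the vector supported on J with (Op_J^* Op_J) v_J = s_J
    (v : EuclideanSpace ℝ (Fin P))
    (hv_supp : ∀ j, j ∉ J → v j = 0)
    (hv_def : ∀ j ∈ J, (ContinuousLinearMap.adjoint Op) (Op v) j = s j) :
    -- conclusion: the characterization, and the formula for η₀ in that case
    ((((∀ j, j ∈ J ↔ |η₀ j| = 1) ∧ ∀ j ∈ J, s j = η₀ j) ↔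
      ((∀ j ∈ J, j ∉ I → v j = 0 ∨ s j = -Real.sign (v j)) ∧
        (∀ k, k ∉ J → |(ContinuousLinearMap.adjoint Op) (Op v) k| < 1))) ∧
     (((∀ j ∈ J, j ∉ I → v j = 0 ∨ s j = -Real.sign (v j)) ∧
        (∀ k, k ∉ J → |(ContinuousLinearMap.adjoint Op) (Op v) k| < 1)) →
      η₀ = (ContinuousLinearMap.adjoint Op) (Op v))) := by
  classical
  set A := ContinuousLinearMap.adjoint Op with hA_def
  -- inner product identities
  have hinL : ∀ (p : H) (u : EuclideanSpace ℝ (Fin P)),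
      (inner ℝ p (Op u) : ℝ) = ∑ i, A p i * u i := by
    intro p u
    rw [hA_def, ← ContinuousLinearMap.adjoint_inner_left]
    simp [PiLp.inner_apply, RCLike.inner_apply, conj_trivial, mul_comm]
  have hinR : ∀ (p : H) (u : EuclideanSpace ℝ (Fin P)),
      (inner ℝ (Op u) p : ℝ) = ∑ i, u i * A p i := by
    intro p u
    rw [hA_def, ← ContinuousLinearMap.adjoint_inner_right]
    simp [PiLp.inner_apply, RCLike.inner_apply, conj_trivial, mul_comm]
  have habs_s : ∀ j ∈ J, |s j| = 1 := by
    intro j hj; rcases hs_sign j hj with h | h <;> simp [h]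
  -- BACKWARD: (i) ∧ (ii) → p₀ = Op v
  have hback : ((∀ j ∈ J, j ∉ I → v j = 0 ∨ s j = -Real.sign (v j)) ∧
      (∀ k, k ∉ J → |A (Op v) k| < 1)) → p₀ = Op v := by
    rintro ⟨hi, hii⟩
    have feas : (∀ i, |A (Op v) i| ≤ 1) ∧ ∀ i ∈ I, A (Op v) i = Real.sign (a₀ i) := by
      constructor
      · intro i
        by_cases hiJ : i ∈ J
        · rw [hv_def i hiJ]; exact le_of_eq (habs_s i hiJ)
        · exact le_of_lt (hii i hiJ)
      · intro i hiI
        rw [hv_def i (hIJ hiI), hsI i hiI]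
    have hmin : ‖p₀‖ ≤ ‖Op v‖ := hp₀_min _ feas
    have h1 : (inner ℝ (Op v) (Op v) : ℝ) ≤ inner ℝ p₀ (Op v) := by
      rw [hinR (Op v) v, hinL p₀ v]
      apply Finset.sum_le_sum
      intro i _
      by_cases hiJ : i ∈ J
      · by_cases hiI : i ∈ I
        · rw [hv_def i hiJ, hp₀_feas.2 i hiI, ← hsI i hiI]
          exact le_of_eq (mul_comm _ _)
        · rcases hi i hiJ hiI with h0 | hs
          · simp [h0]
          · rw [hv_def i hiJ, hs]
            have hb := hp₀_feas.1 i
            have hb1 := (abs_le.1 hb).1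
            have hb2 := (abs_le.1 hb).2
            rcases lt_trichotomy (v i) 0 with hv | hv | hv
            · rw [Real.sign_of_neg hv]; nlinarith
            · simp [hv]
            · rw [Real.sign_of_pos hv]; nlinarith
      · simp [hv_supp i hiJ]
    have h2 : (inner ℝ p₀ (Op v) : ℝ) ≤ ‖p₀‖ * ‖Op v‖ := real_inner_le_norm _ _
    have hself : (inner ℝ (Op v) (Op v) : ℝ) = ‖Op v‖ ^ 2 := real_inner_self_eq_norm_sq _
    have hnv : (0:ℝ) ≤ ‖Op v‖ := norm_nonneg _
    have hnp : (0:ℝ) ≤ ‖p₀‖ := norm_nonneg _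
    have hup : (inner ℝ p₀ (Op v) : ℝ) ≤ ‖Op v‖ ^ 2 := by
      have := mul_le_mul_of_nonneg_right hmin hnv
      nlinarith [h2]
    have heq : (inner ℝ p₀ (Op v) : ℝ) = ‖Op v‖ ^ 2 := le_antisymm hup (hself ▸ h1)
    have hpsq : ‖p₀‖ ^ 2 ≤ ‖Op v‖ ^ 2 := by nlinarith [hmin, hnp]
    have hzero : ‖p₀ - Op v‖ ^ 2 ≤ 0 := by
      rw [norm_sub_sq_real]; linarith [heq, hpsq]
    have : ‖p₀ - Op v‖ = 0 := by nlinarith [norm_nonneg (p₀ - Op v), hzero]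
    exact sub_eq_zero.1 (norm_eq_zero.1 this)
  -- FORWARD: support characterization → (i) ∧ (ii), via p₀ = Op v
  have hfwd : ((∀ j, j ∈ J ↔ |η₀ j| = 1) ∧ ∀ j ∈ J, s j = η₀ j) →
      ((∀ j ∈ J, j ∉ I → v j = 0 ∨ s j = -Real.sign (v j)) ∧
        (∀ k, k ∉ J → |A (Op v) k| < 1)) := by
    rintro ⟨hAx, hB⟩
    have hAp₀ : ∀ i, A p₀ i = η₀ i := by intro i; rw [hη₀, hA_def]
    have hfeas1 : ∀ i, |η₀ i| ≤ 1 := by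
      intro i; rw [← hAp₀]; exact hp₀_feas.1 i
    have hlt : ∀ k, k ∉ J → |η₀ k| < 1 := fun k hk =>
      lt_of_le_of_ne (hfeas1 k) (fun h => hk ((hAx k).2 h))
    have hηJ : ∀ j ∈ J, η₀ j = s j := fun j hj => (hB j hj).symm
    -- step 1 : p₀ = Op v
    obtain ⟨ε, hε0, hε1, hεg⟩ := my_exists_pos_min
      (fun k : Fin P => if k ∈ J then 1 else (1 - |η₀ k|) / (|A (Op v) k - η₀ k| + 1))
      (by
        intro k
        by_cases hk : k ∈ J
        · simp [hk]
        · simp only [hk, if_false]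
          exact div_pos (by linarith [hlt k hk]) (by positivity))
    have hApt : ∀ (t : ℝ) (i : Fin P),
        A (p₀ + t • (Op v - p₀)) i = η₀ i + t * (A (Op v) i - η₀ i) := by
      intro t i
      have : A (p₀ + t • (Op v - p₀)) = A p₀ + t • (A (Op v) - A p₀) := by
        rw [map_add, map_smul, map_sub]
      rw [this]
      simp [PiLp.add_apply, PiLp.smul_apply, PiLp.sub_apply, hAp₀, smul_eq_mul]
    have hfeas_t : ∀ t : ℝ, 0 < t → t ≤ ε → ‖p₀‖ ≤ ‖p₀ + t • (Op v - p₀)‖ := by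
      intro t ht0 htε
      apply hp₀_min
      constructor
      · intro i
        rw [hApt t i]
        by_cases hiJ : i ∈ J
        · rw [hv_def i hiJ, ← hηJ i hiJ]
          simpa using hfeas1 i
        · have hg := hεg i
          simp only [hiJ, if_false] at hg
          have hg2 : ε * (|A (Op v) i - η₀ i| + 1) ≤ 1 - |η₀ i| := by
            rw [← le_div_iff₀ (by positivity)]; exact hg
          have habs : |η₀ i + t * (A (Op v) i - η₀ i)| ≤
              |η₀ i| + t * |A (Op v) i - η₀ i| := by
            calc |η₀ i + t * (A (Op v) i - η₀ i)| ≤ |η₀ i| + |t * (A (Op v) i - η₀ i)| :=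
                abs_add_le _ _
            _ = |η₀ i| + t * |A (Op v) i - η₀ i| := by
                rw [abs_mul, abs_of_pos ht0]
          have hd0 : (0:ℝ) ≤ |A (Op v) i - η₀ i| := abs_nonneg _
          nlinarith [habs, hg2]
      · intro i hiI
        have hiJ : i ∈ J := hIJ hiI
        rw [hApt t i, hv_def i hiJ, ← hηJ i hiJ]
        simp only [sub_self, mul_zero, add_zero]
        rw [← hAp₀ i]
        exact hp₀_feas.2 i hiI
    have hvar : (0:ℝ) ≤ inner ℝ p₀ (Op v - p₀) := my_varineq p₀ _ ε hε0 hfeas_t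
    have heq1 : (inner ℝ p₀ (Op v) : ℝ) = inner ℝ (Op v) (Op v) := by
      rw [hinL p₀ v, hinR (Op v) v]
      apply Finset.sum_congr rfl
      intro i _
      by_cases hiJ : i ∈ J
      · rw [hAp₀ i, hηJ i hiJ, hv_def i hiJ, mul_comm]
      · simp [hv_supp i hiJ]
    have hp0 : p₀ = Op v := by
      rw [inner_sub_right] at hvar
      have hself : (inner ℝ (Op v) (Op v) : ℝ) = ‖Op v‖ ^ 2 := real_inner_self_eq_norm_sq _
      have hselfp : (inner ℝ p₀ p₀ : ℝ) = ‖p₀‖ ^ 2 := real_inner_self_eq_norm_sq _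
      have hzero : ‖p₀ - Op v‖ ^ 2 ≤ 0 := by
        rw [norm_sub_sq_real]
        linarith [hvar, heq1, hself, hselfp]
      have : ‖p₀ - Op v‖ = 0 := by nlinarith [norm_nonneg (p₀ - Op v), hzero]
      exact sub_eq_zero.1 (norm_eq_zero.1 this)
    have hAOv : ∀ i, A (Op v) i = η₀ i := by intro i; rw [← hp0, hAp₀]
    constructor
    · -- (i) via the auxiliary vectors w
      intro j hjJ hjI
      -- the endomorphism T
      let T : EuclideanSpace ℝ (Fin P) →ₗ[ℝ] EuclideanSpace ℝ (Fin P) :=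
        { toFun := fun u => (WithLp.toLp 2 (fun i => if i ∈ J then A (Op u) i else u i) :
            EuclideanSpace ℝ (Fin P))
          map_add' := by
            intro x y
            ext i
            by_cases h : i ∈ J <;>
              simp [h, map_add, PiLp.add_apply]
          map_smul' := by
            intro c x
            ext i
            by_cases h : i ∈ J <;>
              simp [h, map_smul, PiLp.smul_apply] }
      have hT_apply : ∀ (u : EuclideanSpace ℝ (Fin P)) (i : Fin P),
          T u i = if i ∈ J then A (Op u) i else u i := fun u i => rfl
      have hTinj : Function.Injective T := by
        rw [← LinearMap.ker_eq_bot, LinearMap.ker_eq_bot']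
        intro u hu
        have hu' : ∀ i, (if i ∈ J then A (Op u) i else u i) = 0 := by
          intro i; rw [← hT_apply u i, hu]; rfl
        have hsupp : ∀ i, i ∉ J → u i = 0 := by
          intro i hi; have := hu' i; rwa [if_neg hi] at this
        have hOpu : Op u = 0 := by
          have hinner : (inner ℝ (Op u) (Op u) : ℝ) = 0 := by
            rw [hinR (Op u) u]
            apply Finset.sum_eq_zero
            intro i _
            by_cases hiJ : i ∈ J
            · have := hu' i; rw [if_pos hiJ] at this; rw [this, mul_zero]
            · rw [hsupp i hiJ, zero_mul]
          exact inner_self_eq_zero.1 hinner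
        exact hfullrank u hsupp hOpu
      have hTsurj : Function.Surjective T :=
        (LinearMap.injective_iff_surjective).1 hTinj
      obtain ⟨w, hw⟩ := hTsurj (EuclideanSpace.single j 1)
      have hw' : ∀ i, (if i ∈ J then A (Op w) i else w i) =
          (if i = j then (1:ℝ) else 0) := by
        intro i
        rw [← hT_apply w i, hw, EuclideanSpace.single_apply]
      have hw_supp : ∀ i, i ∉ J → w i = 0 := by
        intro i hi
        have := hw' i
        rw [if_neg hi, if_neg (fun h : i = j => hi (h ▸ hjJ))] at this
        exact this
      have hw_def : ∀ i ∈ J, A (Op w) i = if i = j then (1:ℝ) else 0 := by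
        intro i hi
        have := hw' i; rwa [if_pos hi] at this
      -- inner p₀ (Op w) = v j
      have hpw : (inner ℝ p₀ (Op w) : ℝ) = v j := by
        rw [hp0, hinR (Op w) v]
        rw [Finset.sum_eq_single j]
        · rw [hw_def j hjJ, if_pos rfl, mul_one]
        · intro i _ hij
          by_cases hiJ : i ∈ J
          · rw [hw_def i hiJ, if_neg hij, mul_zero]
          · rw [hv_supp i hiJ, zero_mul]
        · intro h; exact absurd (Finset.mem_univ j) h
      -- epsilon for the perturbation
      obtain ⟨ε₂, hε₂0, hε₂1, hε₂g⟩ := my_exists_pos_min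
        (fun k : Fin P => if k ∈ J then 1 else (1 - |η₀ k|) / (|A (Op w) k| + 1))
        (by
          intro k
          by_cases hk : k ∈ J
          · simp [hk]
          · simp only [hk, if_false]
            exact div_pos (by linarith [hlt k hk]) (by positivity))
      have hApt2 : ∀ (t : ℝ) (i : Fin P),
          A (p₀ + t • ((-s j) • Op w)) i = η₀ i + t * (-s j) * A (Op w) i := by
        intro t i
        have : A (p₀ + t • ((-s j) • Op w)) = A p₀ + (t * (-s j)) • A (Op w) := by
          rw [map_add, map_smul, map_smul, smul_smul]
        rw [this]
        simp [PiLp.add_apply, PiLp.smul_apply, hAp₀, smul_eq_mul, mul_assoc]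
      have hfeas2 : ∀ t : ℝ, 0 < t → t ≤ ε₂ → ‖p₀‖ ≤ ‖p₀ + t • ((-s j) • Op w)‖ := by
        intro t ht0 htε
        apply hp₀_min
        constructor
        · intro i
          rw [hApt2 t i]
          by_cases hiJ : i ∈ J
          · rw [hw_def i hiJ]
            by_cases hij : i = j
            · subst hij
              rw [if_pos rfl, mul_one, hηJ i hiJ]
              rcases hs_sign i hiJ with h | h <;>
                · rw [h]; rw [abs_le]; constructor <;> nlinarith
            · rw [if_neg hij, mul_zero, add_zero]
              exact hfeas1 i
          · have hg := hε₂g i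
            simp only [hiJ, if_false] at hg
            have hg2 : ε₂ * (|A (Op w) i| + 1) ≤ 1 - |η₀ i| := by
              rw [← le_div_iff₀ (by positivity)]; exact hg
            have hsj : |s j| = 1 := habs_s j hjJ
            have habs : |η₀ i + t * (-s j) * A (Op w) i| ≤
                |η₀ i| + t * |A (Op w) i| := by
              calc |η₀ i + t * (-s j) * A (Op w) i|
                  ≤ |η₀ i| + |t * (-s j) * A (Op w) i| := abs_add_le _ _
                _ = |η₀ i| + t * |A (Op w) i| := by
                    rw [abs_mul, abs_mul, abs_neg, hsj, abs_of_pos ht0]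
                    ring
            have hd0 : (0:ℝ) ≤ |A (Op w) i| := abs_nonneg _
            nlinarith [habs, hg2]
        · intro i hiI
          have hiJ : i ∈ J := hIJ hiI
          have hij : i ≠ j := fun h => hjI (h ▸ hiI)
          rw [hApt2 t i, hw_def i hiJ, if_neg hij, mul_zero, add_zero, ← hAp₀ i]
          exact hp₀_feas.2 i hiI
      have hvar2 : (0:ℝ) ≤ inner ℝ p₀ ((-s j) • Op w) := my_varineq p₀ _ ε₂ hε₂0 hfeas2
      rw [real_inner_smul_right, hpw] at hvar2
      -- s j * v j ≤ 0
      have hsv : s j * v j ≤ 0 := by nlinarith [hvar2]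
      by_cases hvj : v j = 0
      · left; exact hvj
      · right
        rcases lt_trichotomy (v j) 0 with hv | hv | hv
        · rw [Real.sign_of_neg hv]
          rcases hs_sign j hjJ with h | h
          · rw [h]; norm_num
          · exfalso; rw [h] at hsv; nlinarith
        · exact absurd hv hvj
        · rw [Real.sign_of_pos hv]
          rcases hs_sign j hjJ with h | h
          · exfalso; rw [h] at hsv; nlinarith
          · rw [h]
    · -- (ii)
      intro k hk
      rw [hAOv k]
      exact hlt k hk
  -- assemble
  refine ⟨⟨hfwd, ?_⟩, fun h => by rw [hη₀, hback h]⟩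
  intro hyp
  have hp0 : p₀ = Op v := hback hyp
  have hAOv : ∀ i, η₀ i = A (Op v) i := by intro i; rw [hη₀, hp0]
  refine ⟨fun j => ⟨fun hj => ?_, fun hj => ?_⟩, fun j hj => ?_⟩
  · rw [hAOv j, hv_def j hj]; exact habs_s j hj
  · by_contra hjJ
    have := hyp.2 j hjJ
    rw [← hAOv j] at this
    exact absurd hj (ne_of_lt this)
  · rw [hAOv j]; exact (hv_def j hj).symm
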